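/- arXiv:1407.6329 — 2 statements merged into one kernel-verified Lean document; each statement's English description precedes it below -/
import Mathlib

section
/- Let D be the 3 × 21 matrix over ZMod 4 whose rows are (1,2,2,2,0,3,3,2,0,3,1,3,1,1,1,0,0,1,2,3,1), (0,3,3,0,2,3,1,1,3,3,3,0,0,2,0,1,0,3,3,3,2), and (2,2,0,3,3,2,0,3,1,3,1,1,1,2,0,0,1,2,3,1,1). Then the set C = {c ∈ (ZMod 4)^{21} : D cᵀ = 0} is an additive 1-perfect code in ℤ4^{14} × ℤ4^{7} with respect to the Doob D(7,7)-metric. -/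
open SimpleGraph

/-- The box (Cartesian) product of an indexed family of simple graphs. -/
def boxPi {ι : Type*} {V : ι → Type*} (G : ∀ i, SimpleGraph (V i)) :
    SimpleGraph (∀ i, V i) where
  Adj x y := ∃ i, (G i).Adj (x i) (y i) ∧ ∀ j, j ≠ i → x j = y j
  symm := by
    constructor
    rintro x y ⟨i, h, he⟩
    exact ⟨i, (G i).adj_symm h, fun j hj => (he j hj).symm⟩
  loopless := by
    constructor
    rintro x ⟨i, h, -⟩
    exact (G i).irrefl h

/-- The Shrikhande graph on `(ZMod 4) × (ZMod 4)`. -/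
def Shri : SimpleGraph (ZMod 4 × ZMod 4) where
  Adj a b := a - b ∈
    ({(0, 1), (1, 0), (1, 1), (0, 3), (3, 0), (3, 3)} : Finset (ZMod 4 × ZMod 4))
  symm := by
    constructor
    have h : ∀ a b : ZMod 4 × ZMod 4,
        a - b ∈ ({(0, 1), (1, 0), (1, 1), (0, 3), (3, 0), (3, 3)} :
          Finset (ZMod 4 × ZMod 4)) →
        b - a ∈ ({(0, 1), (1, 0), (1, 1), (0, 3), (3, 0), (3, 3)} :
          Finset (ZMod 4 × ZMod 4)) := by decide
    exact fun a b hab => h a b hab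
  loopless := by
    constructor
    intro a h
    rw [sub_self] at h
    revert h
    decide

/-- `C` is a 1-perfect code in `G`: every vertex is at graph distance at most 1
(i.e., equal or adjacent) from exactly one element of `C`. -/
def IsPerfectCode {V : Type*} (G : SimpleGraph V) (C : Set V) : Prop :=
  ∀ v : V, ∃! c : V, c ∈ C ∧ (v = c ∨ G.Adj v c)

/-- The Doob graph `D(7,7)` on `ℤ₄^{14} × ℤ₄^{7}`, the pairs of the first `14`
coordinates being grouped together. -/
def Doob77 : SimpleGraph ((Fin 7 → ZMod 4 × ZMod 4) × (Fin 7 → ZMod 4)) :=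
  (boxPi fun _ : Fin 7 => Shri) □ (boxPi fun _ : Fin 7 => (⊤ : SimpleGraph (ZMod 4)))

/-- The identification of `(ZMod 4)^{21}` with `ℤ₄^{14} × ℤ₄^{7}`:
the first `14` coordinates are grouped into consecutive pairs. -/
def toDoob77 (c : Fin 21 → ZMod 4) : (Fin 7 → ZMod 4 × ZMod 4) × (Fin 7 → ZMod 4) :=
  (fun i => (c ⟨2 * i.val, by have := i.isLt; omega⟩,
             c ⟨2 * i.val + 1, by have := i.isLt; omega⟩),
   fun i => c ⟨14 + i.val, by have := i.isLt; omega⟩)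

/-- The Doob graph `D(7,7)` transported to the vertex set `(ZMod 4)^{21}`. -/
def Doob77On21 : SimpleGraph (Fin 21 → ZMod 4) :=
  SimpleGraph.comap toDoob77 Doob77

/-- The check matrix. -/
def Dmat : Matrix (Fin 3) (Fin 21) (ZMod 4) :=
  !![1,2,2,2,0,3,3,2,0,3,1,3,1,1,1,0,0,1,2,3,1;
     0,3,3,0,2,3,1,1,3,3,3,0,0,2,0,1,0,3,3,3,2;
     2,2,0,3,3,2,0,3,1,3,1,1,1,2,0,0,1,2,3,1,1]

/- Auxiliary development -/

/-- The six Shrikhande connection-set differences, as a list. -/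
def Slist : List (ZMod 4 × ZMod 4) := [(0,1),(1,0),(1,1),(0,3),(3,0),(3,3)]

/-- A vector supported on the `i`-th Shrikhande pair. -/
def shriVec (i : Fin 7) (d : ZMod 4 × ZMod 4) : Fin 21 → ZMod 4 :=
  fun j => if j.val = 2 * i.val then d.1 else if j.val = 2 * i.val + 1 then d.2 else 0

/-- A vector supported on the `k`-th K4 coordinate. -/
def k4Vec (k : Fin 7) (a : ZMod 4) : Fin 21 → ZMod 4 :=
  fun j => if j.val = 14 + k.val then a else 0

/-- The ball of radius 1 around `0`, as a list of 64 vectors. -/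
def Lball : List (Fin 21 → ZMod 4) :=
  (0 : Fin 21 → ZMod 4) ::
    (((List.finRange 7).flatMap fun i => Slist.map (shriVec i)) ++
     ((List.finRange 7).flatMap fun k => ([1,2,3] : List (ZMod 4)).map (k4Vec k)))

/-- Membership in the ball, in parametric form. -/
def Qp (u : Fin 21 → ZMod 4) : Prop :=
  u = 0 ∨ (∃ i d, d ∈ Slist ∧ u = shriVec i d) ∨
    (∃ k a, a ≠ (0 : ZMod 4) ∧ u = k4Vec k a)

lemma zmod_ne_zero_iff : ∀ a : ZMod 4,
    (a = 1 ∨ a = 2 ∨ a = 3 ∨ a ∈ ([] : List (ZMod 4))) ↔ a ≠ 0 := by decide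

lemma mem_Lball_iff (u : Fin 21 → ZMod 4) : u ∈ Lball ↔ Qp u := by
  simp only [Lball, Qp, List.mem_cons, List.mem_append, List.mem_flatMap, List.mem_map,
    List.mem_finRange, true_and]
  constructor
  · rintro (h0 | ⟨i, d, hd, hu⟩ | ⟨k, a, ha, hu⟩)
    · exact Or.inl h0
    · exact Or.inr (Or.inl ⟨i, d, hd, hu.symm⟩)
    · exact Or.inr (Or.inr ⟨k, a, (zmod_ne_zero_iff a).mp ha, hu.symm⟩)
  · rintro (h0 | ⟨i, d, hd, hu⟩ | ⟨k, a, ha, hu⟩)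
    · exact Or.inl h0
    · exact Or.inr (Or.inl ⟨i, d, hd, hu.symm⟩)
    · exact Or.inr (Or.inr ⟨k, a, (zmod_ne_zero_iff a).mpr ha, hu.symm⟩)

lemma toDoob_shriVec_same : ∀ (i : Fin 7) (d : ZMod 4 × ZMod 4),
    (toDoob77 (shriVec i d)).1 i = d := by decide

lemma toDoob_shriVec_other : ∀ (i j : Fin 7) (d : ZMod 4 × ZMod 4), j ≠ i →
    (toDoob77 (shriVec i d)).1 j = 0 := by decide

lemma toDoob_shriVec_snd : ∀ (i : Fin 7) (d : ZMod 4 × ZMod 4) (k : Fin 7),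
    (toDoob77 (shriVec i d)).2 k = 0 := by decide

lemma toDoob_k4Vec_same : ∀ (k : Fin 7) (a : ZMod 4),
    (toDoob77 (k4Vec k a)).2 k = a := by decide

lemma toDoob_k4Vec_other : ∀ (k k' : Fin 7) (a : ZMod 4), k' ≠ k →
    (toDoob77 (k4Vec k a)).2 k' = 0 := by decide

lemma toDoob_k4Vec_fst : ∀ (k : Fin 7) (a : ZMod 4) (j : Fin 7),
    (toDoob77 (k4Vec k a)).1 j = 0 := by decide

lemma Slist_mem_finset : ∀ p : ZMod 4 × ZMod 4,
    p ∈ ({(0, 1), (1, 0), (1, 1), (0, 3), (3, 0), (3, 3)} : Finset (ZMod 4 × ZMod 4)) ↔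
    p ∈ Slist := by decide

lemma eq_shriVec {u : Fin 21 → ZMod 4} (i : Fin 7)
    (h2 : ∀ j : Fin 7, j ≠ i → (toDoob77 u).1 j = 0)
    (h3 : ∀ k : Fin 7, (toDoob77 u).2 k = 0) :
    u = shriVec i ((toDoob77 u).1 i) := by
  funext j
  unfold shriVec
  by_cases hj1 : j.val = 2 * i.val
  · rw [if_pos hj1]
    show u j = u ⟨2 * i.val, by omega⟩
    exact congrArg u (Fin.ext hj1)
  · rw [if_neg hj1]
    by_cases hj2 : j.val = 2 * i.val + 1
    · rw [if_pos hj2]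
      show u j = u ⟨2 * i.val + 1, by omega⟩
      exact congrArg u (Fin.ext hj2)
    · rw [if_neg hj2]
      rcases lt_or_ge j.val 14 with h14 | h14
      · have hjlt : j.val / 2 < 7 := by omega
        set m : Fin 7 := ⟨j.val / 2, hjlt⟩ with hm
        have hmi : m ≠ i := by
          intro he
          have : j.val / 2 = i.val := congrArg Fin.val he
          omega
        have hz := h2 m hmi
        have h1' : u ⟨2 * m.val, by omega⟩ = 0 := congrArg Prod.fst hz
        have h2' : u ⟨2 * m.val + 1, by omega⟩ = 0 := congrArg Prod.snd hz
        have hmv : m.val = j.val / 2 := rfl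
        rcases (by omega : j.val = 2 * m.val ∨ j.val = 2 * m.val + 1) with h | h
        · rw [show j = (⟨2 * m.val, by omega⟩ : Fin 21) from Fin.ext h]; exact h1'
        · rw [show j = (⟨2 * m.val + 1, by omega⟩ : Fin 21) from Fin.ext h]; exact h2'
      · have := h3 ⟨j.val - 14, by omega⟩
        rw [show j = (⟨14 + (j.val - 14), by omega⟩ : Fin 21) from
          Fin.ext (show j.val = 14 + (j.val - 14) by omega)]
        exact this

lemma eq_k4Vec {u : Fin 21 → ZMod 4} (k : Fin 7)
    (h2 : ∀ k' : Fin 7, k' ≠ k → (toDoob77 u).2 k' = 0)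
    (h3 : ∀ j : Fin 7, (toDoob77 u).1 j = 0) :
    u = k4Vec k ((toDoob77 u).2 k) := by
  funext j
  unfold k4Vec
  by_cases hj : j.val = 14 + k.val
  · rw [if_pos hj]
    show u j = u ⟨14 + k.val, by omega⟩
    exact congrArg u (Fin.ext hj)
  · rw [if_neg hj]
    rcases lt_or_ge j.val 14 with h14 | h14
    · have hjlt : j.val / 2 < 7 := by omega
      have hz := h3 ⟨j.val / 2, hjlt⟩
      have h1' : u ⟨2 * (j.val / 2), by omega⟩ = 0 := congrArg Prod.fst hz
      have h2' : u ⟨2 * (j.val / 2) + 1, by omega⟩ = 0 := congrArg Prod.snd hz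
      rcases (by omega : j.val = 2 * (j.val / 2) ∨ j.val = 2 * (j.val / 2) + 1) with h | h
      · rw [show j = (⟨2 * (j.val / 2), by omega⟩ : Fin 21) from Fin.ext h]; exact h1'
      · rw [show j = (⟨2 * (j.val / 2) + 1, by omega⟩ : Fin 21) from Fin.ext h]; exact h2'
    · have hkk : (⟨j.val - 14, by omega⟩ : Fin 7) ≠ k := by
        intro he
        have : j.val - 14 = k.val := congrArg Fin.val he
        omega
      have := h2 ⟨j.val - 14, by omega⟩ hkk
      rw [show j = (⟨14 + (j.val - 14), by omega⟩ : Fin 21) from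
        Fin.ext (show j.val = 14 + (j.val - 14) by omega)]
      exact this

lemma ball_iff (v c : Fin 21 → ZMod 4) :
    (v = c ∨ Doob77On21.Adj v c) ↔ Qp (v - c) := by
  constructor
  · rintro (rfl | hadj)
    · exact Or.inl (sub_self v)
    · have hadj' : ((boxPi fun _ : Fin 7 => Shri) □
          (boxPi fun _ : Fin 7 => (⊤ : SimpleGraph (ZMod 4)))).Adj
          (toDoob77 v) (toDoob77 c) := hadj
      rcases hadj' with ⟨⟨i, hS, hrest⟩, hy⟩ | ⟨⟨k, hne, hrest⟩, hx⟩
      · refine Or.inr (Or.inl ⟨i, (toDoob77 (v - c)).1 i, ?_, ?_⟩)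
        · have hS' : (toDoob77 v).1 i - (toDoob77 c).1 i ∈
              ({(0, 1), (1, 0), (1, 1), (0, 3), (3, 0), (3, 3)} :
                Finset (ZMod 4 × ZMod 4)) := hS
          exact (Slist_mem_finset _).mp hS'
        · refine eq_shriVec i (fun j hj => ?_) (fun k => ?_)
          · show (toDoob77 v).1 j - (toDoob77 c).1 j = 0
            exact sub_eq_zero_of_eq (hrest j hj)
          · show (toDoob77 v).2 k - (toDoob77 c).2 k = 0
            exact sub_eq_zero_of_eq (congrFun hy k)
      · refine Or.inr (Or.inr ⟨k, (toDoob77 (v - c)).2 k, ?_, ?_⟩)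
        · have hne' : (toDoob77 v).2 k ≠ (toDoob77 c).2 k := hne.ne
          show (toDoob77 v).2 k - (toDoob77 c).2 k ≠ 0
          exact sub_ne_zero_of_ne hne'
        · refine eq_k4Vec k (fun k' hk' => ?_) (fun j => ?_)
          · show (toDoob77 v).2 k' - (toDoob77 c).2 k' = 0
            exact sub_eq_zero_of_eq (hrest k' hk')
          · show (toDoob77 v).1 j - (toDoob77 c).1 j = 0
            exact sub_eq_zero_of_eq (congrFun hx j)
  · rintro (h0 | ⟨i, d, hd, hu⟩ | ⟨k, a, ha, hu⟩)
    · exact Or.inl (sub_eq_zero.mp h0)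
    · refine Or.inr ?_
      have hx : ∀ j : Fin 7,
          (toDoob77 v).1 j - (toDoob77 c).1 j = (toDoob77 (shriVec i d)).1 j := by
        intro j
        show (toDoob77 (v - c)).1 j = _
        rw [hu]
      have hy : ∀ k : Fin 7,
          (toDoob77 v).2 k - (toDoob77 c).2 k = (toDoob77 (shriVec i d)).2 k := by
        intro k
        show (toDoob77 (v - c)).2 k = _
        rw [hu]
      show ((boxPi fun _ : Fin 7 => Shri) □
          (boxPi fun _ : Fin 7 => (⊤ : SimpleGraph (ZMod 4)))).Adj
          (toDoob77 v) (toDoob77 c)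
      refine Or.inl ⟨⟨i, ?_, fun j hj => ?_⟩, ?_⟩
      · show (toDoob77 v).1 i - (toDoob77 c).1 i ∈
            ({(0, 1), (1, 0), (1, 1), (0, 3), (3, 0), (3, 3)} :
              Finset (ZMod 4 × ZMod 4))
        rw [hx i, toDoob_shriVec_same]
        exact (Slist_mem_finset d).mpr hd
      · refine sub_eq_zero.mp ?_
        rw [hx j, toDoob_shriVec_other i j d hj]
      · funext k
        refine sub_eq_zero.mp ?_
        rw [hy k, toDoob_shriVec_snd]
    · refine Or.inr ?_
      have hx : ∀ j : Fin 7,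
          (toDoob77 v).1 j - (toDoob77 c).1 j = (toDoob77 (k4Vec k a)).1 j := by
        intro j
        show (toDoob77 (v - c)).1 j = _
        rw [hu]
      have hy : ∀ k' : Fin 7,
          (toDoob77 v).2 k' - (toDoob77 c).2 k' = (toDoob77 (k4Vec k a)).2 k' := by
        intro k'
        show (toDoob77 (v - c)).2 k' = _
        rw [hu]
      show ((boxPi fun _ : Fin 7 => Shri) □
          (boxPi fun _ : Fin 7 => (⊤ : SimpleGraph (ZMod 4)))).Adj
          (toDoob77 v) (toDoob77 c)
      refine Or.inr ⟨⟨k, ?_, fun k' hk' => ?_⟩, ?_⟩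
      · show (toDoob77 v).2 k ≠ (toDoob77 c).2 k
        intro he
        apply ha
        rw [← toDoob_k4Vec_same k a, ← hy k, he, sub_self]
      · refine sub_eq_zero.mp ?_
        rw [hy k', toDoob_k4Vec_other k k' a hk']
      · funext j
        refine sub_eq_zero.mp ?_
        rw [hx j, toDoob_k4Vec_fst]

set_option maxRecDepth 10000 in
lemma fact1 : ∀ t : Fin 3 → ZMod 4, ∃ u ∈ Lball, Dmat.mulVec u = t := by decide

set_option maxRecDepth 10000 in
lemma fact2 : (Lball.map Dmat.mulVec).Nodup := by decide

theorem additive_perfect_code_in_D77 :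
    (∃ H : AddSubgroup (Fin 21 → ZMod 4),
        {c : Fin 21 → ZMod 4 | Dmat.mulVec c = 0} = (H : Set (Fin 21 → ZMod 4))) ∧
    IsPerfectCode Doob77On21 {c : Fin 21 → ZMod 4 | Dmat.mulVec c = 0} := by
  constructor
  · refine ⟨(LinearMap.ker (Matrix.mulVecLin Dmat)).toAddSubgroup, ?_⟩
    ext c
    simp [Submodule.mem_toAddSubgroup, LinearMap.mem_ker, Matrix.mulVecLin_apply]
  · intro v
    obtain ⟨u, huL, hsu⟩ := fact1 (Dmat.mulVec v)
    refine ⟨v - u, ⟨?_, ?_⟩, ?_⟩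
    · show Dmat.mulVec (v - u) = 0
      rw [Matrix.mulVec_sub, hsu, sub_self]
    · rw [ball_iff, sub_sub_cancel]
      exact (mem_Lball_iff u).mp huL
    · rintro c' ⟨hc', hball⟩
      rw [ball_iff] at hball
      have h1 : v - c' ∈ Lball := (mem_Lball_iff _).mpr hball
      have hc'0 : Dmat.mulVec c' = 0 := hc'
      have h2 : Dmat.mulVec (v - c') = Dmat.mulVec u := by
        rw [Matrix.mulVec_sub, hc'0, sub_zero, hsu]
      have h3 : v - c' = u := List.inj_on_of_nodup_map fact2 h1 huL h2
      calc c' = v - (v - c') := (sub_sub_cancel v c').symm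
        _ = v - u := by rw [h3]
end

section
/- Let k, r ≥ 1 and 0 ≤ m ≤ kr be integers, and fix a subset M of {1,…,k} × {1,…,r} with |M| = m. For each (i,j) ∈ M let f_{i,j}, g_{i,j} : E4 × E2 → E2 be functions such that {(x̄, f_{i,j}(x̄), g_{i,j}(x̄)) : x̄ ∈ E4 × E2} is a 1-perfect code in the Doob graph D(1,3) on vertex set E4 × E2 × E2 × E2, and for each (i,j) ∉ M let f_{i,j}, g_{i,j} : E2^3 → E2 be functions such that {(x̄, f_{i,j}(x̄), g_{i,j}(x̄)) : x̄ ∈ E2^3} is a 1-perfect code in the Hamming graph H(5,4). Let V = Π_{(i,j)} V_{i,j} where V_{i,j} = E4 × E2 for (i,j) ∈ M and V_{i,j} = E2^3 otherwise. Define f : V → E2^k by f(x)_i = Σ_{j=1}^r f_{i,j}(x_{i,j}) and g : V → E2^r by g(x)_j = Σ_{i=1}^k g_{i,j}(x_{i,j}). Let C' ⊆ E2^k and C'' ⊆ E2^r be 1-perfect codes in the Hamming graphs H(k,4) and H(r,4) respectively. Then the set C = {(x, f(x)+c', g(x)+c'') : x ∈ V, c' ∈ C', c'' ∈ C''} is a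 1-perfect code in the graph which is the box product of one copy of Sh and one copy of K4 for each (i,j) ∈ M, three copies of K4 for each (i,j) ∉ M, and k + r further copies of K4 (this graph is isomorphic to the Doob graph D(m, 3kr − 2m + k + r)). -/
open SimpleGraph Polynomial

/-- The Galois ring `GR(4²)`, realized as the quotient ring
`(ZMod 4)[X]/(X² + X + 1)`. -/
abbrev E4 : Type := AdjoinRoot (X ^ 2 + X + 1 : Polynomial (ZMod 4))

/-- The Galois field `GF(4)`, realized as `(ZMod 2)[X]/(X² + X + 1)`. -/
abbrev E2 : Type := AdjoinRoot (X ^ 2 + X + 1 : Polynomial (ZMod 2))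

/-- `ω`, the image of `X` in `E4`. -/
noncomputable def ω4 : E4 := AdjoinRoot.root (X ^ 2 + X + 1 : Polynomial (ZMod 4))

/-- `ω`, the image of `X` in `E2`. -/
noncomputable def ω2 : E2 := AdjoinRoot.root (X ^ 2 + X + 1 : Polynomial (ZMod 2))

/-- The set `ε = {1, ω, ω², −1, −ω, −ω²} ⊆ E4`. -/
def epsE4 : Set E4 := {1, ω4, ω4 ^ 2, -1, -ω4, -ω4 ^ 2}

/-- The Shrikhande graph on the 16 elements of `E4`: two vertices are adjacent
iff their difference lies in `ε`. -/
def ShE : SimpleGraph E4 := SimpleGraph.fromRel fun a b => a - b ∈ epsE4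

/-- The Hamming graph `H(n,4)` on `n`-tuples over `E2`. -/
def HamE (n : ℕ) : SimpleGraph (Fin n → E2) :=
  boxPi fun _ : Fin n => (⊤ : SimpleGraph E2)

/-- The vertex type of the cell `(i,j)`: `E4 × E2` for `(i,j) ∈ M` and
`E2³` otherwise. -/
abbrev CellVtx {k r : ℕ} (M : Finset (Fin k × Fin r)) (p : Fin k × Fin r) : Type :=
  if p ∈ M then E4 × E2 else (Fin 3 → E2)

/-- The graph on the cell `(i,j)`: `Sh □ K₄` (one copy of the Shrikhande graph
and one copy of `K₄`) for `(i,j) ∈ M`, and `K₄ □ K₄ □ K₄` (three copies of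
`K₄`) otherwise. -/
noncomputable def CellGraph {k r : ℕ} (M : Finset (Fin k × Fin r))
    (p : Fin k × Fin r) : SimpleGraph (CellVtx M p) :=
  if h : p ∈ M then
    cast (congrArg SimpleGraph (if_pos h).symm) (ShE □ (⊤ : SimpleGraph E2))
  else
    cast (congrArg SimpleGraph (if_neg h).symm)
      (boxPi fun _ : Fin 3 => (⊤ : SimpleGraph E2))

/-- The big graph: the box product of the cell graphs (one copy of `Sh` and one
copy of `K₄` for each `(i,j) ∈ M`, three copies of `K₄` for each `(i,j) ∉ M`)
and `k + r` further copies of `K₄`. -/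
noncomputable def BigGraph (k r : ℕ) (M : Finset (Fin k × Fin r)) :
    SimpleGraph ((∀ p : Fin k × Fin r, CellVtx M p) × (Fin k → E2) × (Fin r → E2)) :=
  (boxPi (CellGraph M)) □ (HamE k □ HamE r)

/-- The Doob graph `D(m,n)` on the vertex set `E4^m × E2^n`. -/
noncomputable def DoobE (m n : ℕ) : SimpleGraph ((Fin m → E4) × (Fin n → E2)) :=
  (boxPi fun _ : Fin m => ShE) □ (boxPi fun _ : Fin n => (⊤ : SimpleGraph E2))

/-! ### Auxiliary machinery -/

lemma boxPi_adj {ι : Type*} {V : ι → Type*} (G : ∀ i, SimpleGraph (V i)) (x y : ∀ i, V i) :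
    (boxPi G).Adj x y ↔ ∃ i, (G i).Adj (x i) (y i) ∧ ∀ j, j ≠ i → x j = y j := Iff.rfl

def graphCastIso {V W : Type} (h : V = W) (G : SimpleGraph V) :
    G ≃g cast (congrArg SimpleGraph h) G := by
  subst h; exact Iso.refl

def boxProdCongr {V₁ V₂ W₁ W₂ : Type*} {G₁ : SimpleGraph V₁} {G₂ : SimpleGraph V₂}
    {H₁ : SimpleGraph W₁} {H₂ : SimpleGraph W₂} (e : G₁ ≃g G₂) (h : H₁ ≃g H₂) :
    boxProd G₁ H₁ ≃g boxProd G₂ H₂ where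
  toEquiv := Equiv.prodCongr e.toEquiv h.toEquiv
  map_rel_iff' := by
    rintro ⟨a, b⟩ ⟨c, d⟩
    simp [boxProd_adj, e.map_adj_iff, h.map_adj_iff, e.toEquiv.apply_eq_iff_eq,
      h.toEquiv.apply_eq_iff_eq]

def boxPiCongr {ι ι' : Type*} (e : ι ≃ ι') {V : ι → Type*} {V' : ι' → Type*}
    {G : ∀ i, SimpleGraph (V i)} {G' : ∀ i', SimpleGraph (V' i')}
    (h : ∀ i, G i ≃g G' (e i)) : boxPi G ≃g boxPi G' where
  toEquiv := Equiv.piCongr e (fun i => (h i).toEquiv)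
  map_rel_iff' := by
    intro x y
    constructor
    · rintro ⟨i', hadj, heq⟩
      obtain ⟨i, rfl⟩ := e.surjective i'
      refine ⟨i, ?_, ?_⟩
      · rw [← (h i).map_adj_iff]
        simpa [Equiv.piCongr_apply_apply] using hadj
      · intro j hj
        have := heq (e j) (fun hh => hj (e.injective hh))
        simpa [Equiv.piCongr_apply_apply] using this
    · rintro ⟨i, hadj, heq⟩
      refine ⟨e i, ?_, ?_⟩
      · simpa [Equiv.piCongr_apply_apply] using (h i).map_adj_iff.2 hadj
      · intro j' hj'
        obtain ⟨j, rfl⟩ := e.surjective j'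
        have : j ≠ i := fun hh => hj' (by rw [hh])
        simp [Equiv.piCongr_apply_apply, heq j this]

def boxPiSum {ι κ : Type*} {V : ι ⊕ κ → Type*} (G : ∀ s, SimpleGraph (V s)) :
    boxPi G ≃g (boxPi fun i => G (.inl i)) □ (boxPi fun j => G (.inr j)) where
  toEquiv := Equiv.sumPiEquivProdPi V
  map_rel_iff' := by
    intro x y
    constructor
    · rintro (⟨⟨i, hadj, heq⟩, h2⟩ | ⟨⟨j, hadj, heq⟩, h1⟩)
      · refine ⟨.inl i, hadj, ?_⟩
        rintro (a | b) hab
        · exact heq a (fun hh => hab (by rw [hh]))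
        · exact congrFun h2 b
      · refine ⟨.inr j, hadj, ?_⟩
        rintro (a | b) hab
        · exact congrFun h1 a
        · exact heq b (fun hh => hab (by rw [hh]))
    · rintro ⟨(i | j), hadj, heq⟩
      · exact Or.inl ⟨⟨i, hadj, fun a ha => heq (.inl a) (fun hh => ha (by injection hh))⟩,
          funext fun b => heq (.inr b) (by simp)⟩
      · exact Or.inr ⟨⟨j, hadj, fun b hb => heq (.inr b) (fun hh => hb (by injection hh))⟩,
          funext fun a => heq (.inl a) (by simp)⟩

def boxPiProd {ι : Type*} {V W : ι → Type*} (G : ∀ i, SimpleGraph (V i))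
    (H : ∀ i, SimpleGraph (W i)) :
    (boxPi fun i => G i □ H i) ≃g boxPi G □ boxPi H where
  toEquiv := { toFun := fun x => (fun i => (x i).1, fun i => (x i).2)
               invFun := fun x i => (x.1 i, x.2 i)
               left_inv := fun x => rfl
               right_inv := fun x => rfl }
  map_rel_iff' := by
    intro x y
    constructor
    · rintro (⟨⟨i, hadj, heq⟩, h2⟩ | ⟨⟨i, hadj, heq⟩, h1⟩)
      · refine ⟨i, Or.inl ⟨hadj, congrFun h2 i⟩, fun j hj => ?_⟩
        exact Prod.ext (heq j hj) (congrFun h2 j)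
      · refine ⟨i, Or.inr ⟨hadj, congrFun h1 i⟩, fun j hj => ?_⟩
        exact Prod.ext (congrFun h1 j) (heq j hj)
    · rintro ⟨i, (⟨hadj, he⟩ | ⟨hadj, he⟩), heq⟩
      · exact Or.inl ⟨⟨i, hadj, fun j hj => congrArg Prod.fst (heq j hj)⟩,
          funext fun j => by by_cases hj : j = i
                             · subst hj; exact he
                             · exact congrArg Prod.snd (heq j hj)⟩
      · exact Or.inr ⟨⟨i, hadj, fun j hj => congrArg Prod.snd (heq j hj)⟩,
          funext fun j => by by_cases hj : j = i
                             · subst hj; exact he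
                             · exact congrArg Prod.fst (heq j hj)⟩

def boxPiPi {ι κ : Type*} {V : ι → κ → Type*} (G : ∀ i j, SimpleGraph (V i j)) :
    (boxPi fun i => boxPi (G i)) ≃g (boxPi fun p : ι × κ => G p.1 p.2) where
  toEquiv := { toFun := fun x p => x p.1 p.2
               invFun := fun x i j => x (i, j)
               left_inv := fun x => rfl
               right_inv := fun x => rfl }
  map_rel_iff' := by
    intro x y
    constructor
    · rintro ⟨⟨i, j⟩, hadj, heq⟩
      refine ⟨i, ⟨j, hadj, fun j' hj' => heq (i, j') (by simp [hj'])⟩, fun i' hi' =>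
        funext fun j' => heq (i', j') (by simp [hi'])⟩
    · rintro ⟨i, ⟨j, hadj, heqj⟩, heqi⟩
      refine ⟨(i, j), hadj, ?_⟩
      rintro ⟨i', j'⟩ hp
      by_cases hi : i' = i
      · subst hi
        have hj : j' ≠ j := fun hh => hp (by rw [hh])
        exact heqj j' hj
      · exact congrFun (heqi i' hi) j'

/-! ### The isomorphism part -/

section IsoPart
variable {k r m : ℕ} (M : Finset (Fin k × Fin r))

noncomputable def cellIsoIn {p : Fin k × Fin r} (h : p ∈ M) :
    CellGraph M p ≃g (ShE □ (⊤ : SimpleGraph E2)) := by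
  rw [CellGraph, dif_pos h]
  exact (graphCastIso (if_pos h).symm _).symm

noncomputable def cellIsoOut {p : Fin k × Fin r} (h : p ∉ M) :
    CellGraph M p ≃g (boxPi fun _ : Fin 3 => (⊤ : SimpleGraph E2)) := by
  rw [CellGraph, dif_neg h]
  exact (graphCastIso (if_neg h).symm _).symm

noncomputable def G1 : ∀ s : {p : Fin k × Fin r // p ∈ M} ⊕ {p : Fin k × Fin r // p ∉ M},
    SimpleGraph (Sum.elim (fun _ => E4 × E2) (fun _ => Fin 3 → E2) s)
  | .inl _ => ShE □ (⊤ : SimpleGraph E2)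
  | .inr _ => boxPi fun _ : Fin 3 => (⊤ : SimpleGraph E2)

noncomputable def isoCells [DecidablePred (· ∈ M)] :
    boxPi (CellGraph M) ≃g boxPi (G1 M) := by
  refine boxPiCongr (Equiv.sumCompl (· ∈ M)).symm (fun p => ?_)
  by_cases h : p ∈ M
  · rw [Equiv.sumCompl_symm_apply_of_pos h]
    exact cellIsoIn M h
  · rw [Equiv.sumCompl_symm_apply_of_neg h]
    exact cellIsoOut M h

noncomputable def isoConst {ι κ : Type*} [Fintype ι] [Fintype κ] {W : Type*}
    (G : SimpleGraph W) (h : Fintype.card ι = Fintype.card κ) :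
    (boxPi fun _ : ι => G) ≃g (boxPi fun _ : κ => G) :=
  boxPiCongr (Fintype.equivFinOfCardEq h |>.trans (Fintype.equivFinOfCardEq rfl).symm)
    (fun _ => Iso.refl)

noncomputable def mergeConst {ι κ : Type*} {W : Type*} (G : SimpleGraph W) :
    ((boxPi fun _ : ι => G) □ (boxPi fun _ : κ => G)) ≃g (boxPi fun _ : ι ⊕ κ => G) :=
  (boxPiSum (fun _ : ι ⊕ κ => G)).symm

noncomputable def bigIso (hM : M.card = m) (hm : m ≤ k * r) :
    BigGraph k r M ≃g DoobE m (3 * k * r - 2 * m + k + r) := by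
  classical
  let A := {p : Fin k × Fin r // p ∈ M}
  let B := {p : Fin k × Fin r // p ∉ M}
  have cardA : Fintype.card A = m := by
    simpa [A] using hM
  have cardB : Fintype.card B = k * r - m := by
    have := Fintype.card_subtype_compl (· ∈ M) (α := Fin k × Fin r)
    simpa [A, B, cardA] using this
  have i1 : boxPi (CellGraph M) ≃g
      ((boxPi fun _ : A => ShE) □ (boxPi fun _ : A => (⊤ : SimpleGraph E2))) □
      (boxPi fun _ : B × Fin 3 => (⊤ : SimpleGraph E2)) :=
    (isoCells M).trans ((boxPiSum (G1 M)).trans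
      (boxProdCongr (boxPiProd _ _) (boxPiPi _)))
  have cardN : Fintype.card
      (A ⊕ (B × Fin 3 ⊕ (Fin k ⊕ Fin r))) = 3 * k * r - 2 * m + k + r := by
    have h1 : ∀ inst : Fintype A, @Fintype.card A inst = m := fun inst => by
      rw [Subsingleton.elim inst]; exact cardA
    have h2 : ∀ inst : Fintype B, @Fintype.card B inst = k * r - m := fun inst => by
      rw [Subsingleton.elim inst]; exact cardB
    simp only [Fintype.card_sum, Fintype.card_prod, Fintype.card_fin]
    rw [h1 _, h2 _, show 3 * k * r = 3 * (k * r) from by ring]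
    omega
  have cardM : Fintype.card A = Fintype.card (Fin m) := by simp [cardA]
  refine ((boxProdCongr i1 (Iso.refl)).trans ?_)
  refine (boxProdAssoc _ _ _).trans ?_
  refine (boxProdAssoc _ _ _).trans ?_
  refine (boxProdCongr (Iso.refl)
    ((boxProdCongr (Iso.refl) ((boxProdCongr (Iso.refl) (mergeConst _)).trans
        (mergeConst _))).trans (mergeConst _))).trans ?_
  exact boxProdCongr (isoConst ShE cardM) (isoConst _ (cardN.trans (Fintype.card_fin _).symm))

end IsoPart

/-! ### The perfect-code part -/

lemma sum_shift {ι β : Type*} [Fintype ι] [DecidableEq ι] [AddCommGroup β]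
    (h h' : ι → β) (j : ι) (hoff : ∀ j', j' ≠ j → h' j' = h j') :
    ∑ j', h' j' = (∑ j', h j') - h j + h' j := by
  classical
  have e1 : ∑ j', h' j' = h' j + ∑ j' ∈ Finset.univ.erase j, h' j' :=
    (Finset.add_sum_erase _ _ (Finset.mem_univ j)).symm
  have e2 : ∑ j', h j' = h j + ∑ j' ∈ Finset.univ.erase j, h j' :=
    (Finset.add_sum_erase _ _ (Finset.mem_univ j)).symm
  have e3 : ∑ j' ∈ Finset.univ.erase j, h' j' = ∑ j' ∈ Finset.univ.erase j, h j' :=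
    Finset.sum_congr rfl fun j' hj' => hoff j' (Finset.ne_of_mem_erase hj')
  rw [e1, e3, e2]
  abel

lemma hamNear {n : ℕ} (u w : Fin n → E2) (i₀ : Fin n) (h : ∀ i, i ≠ i₀ → u i = w i) :
    u = w ∨ (HamE n).Adj u w := by
  by_cases he : u i₀ = w i₀
  · left
    funext i
    by_cases hi : i = i₀
    · subst hi; exact he
    · exact h i hi
  · right
    exact ⟨i₀, by simpa using he, h⟩

lemma cellKey {W : Type*} (Gc : SimpleGraph W) (fc gc : W → E2)
    (hp : IsPerfectCode (Gc □ ((⊤ : SimpleGraph E2) □ (⊤ : SimpleGraph E2)))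
      {q : W × E2 × E2 | ∃ x : W, q = (x, fc x, gc x)})
    (u : W) (δ γ : E2) :
    ∃ w : W, ((δ ≠ 0 ∧ γ ≠ 0) → Gc.Adj u w ∧ fc w = fc u + δ ∧ gc w = gc u + γ) ∧
      ∀ w' : W, Gc.Adj u w' → fc w' = fc u + δ → gc w' = gc u + γ →
        (δ ≠ 0 ∧ γ ≠ 0) ∧ w' = w := by
  obtain ⟨c, ⟨hcmem, hcnear⟩, hcu⟩ := hp (u, fc u + δ, gc u + γ)
  obtain ⟨xc, rfl⟩ := hcmem
  have hu_eq : (δ = 0 ∨ γ = 0) → u = xc := by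
    intro hor
    have hunear : (u, fc u + δ, gc u + γ) = (u, fc u, gc u) ∨
        (Gc □ ((⊤ : SimpleGraph E2) □ (⊤ : SimpleGraph E2))).Adj
          (u, fc u + δ, gc u + γ) (u, fc u, gc u) := by
      rcases eq_or_ne δ 0 with hδ0 | hδ0
      · rcases eq_or_ne γ 0 with hγ0 | hγ0
        · exact Or.inl (by rw [hδ0, hγ0, add_zero, add_zero])
        · refine Or.inr (Or.inr ⟨Or.inr ⟨?_, by rw [hδ0, add_zero]⟩, rfl⟩)
          simp only [top_adj]
          intro hcon
          exact hγ0 (by linear_combination hcon)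
      · rcases hor with h0 | hγ0
        · exact absurd h0 hδ0
        · refine Or.inr (Or.inr ⟨Or.inl ⟨?_, by rw [hγ0, add_zero]⟩, rfl⟩)
          simp only [top_adj]
          intro hcon
          exact hδ0 (by linear_combination hcon)
    have := hcu (u, fc u, gc u) ⟨⟨u, rfl⟩, hunear⟩
    exact congrArg Prod.fst this
  refine ⟨xc, ?_, ?_⟩
  · rintro ⟨hδ, hγ⟩
    rcases hcnear with heq | hadj
    · exfalso
      obtain ⟨h1, h2, h3⟩ : u = xc ∧ fc u + δ = fc xc ∧ gc u + γ = gc xc := by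
        simpa [Prod.ext_iff] using heq
      subst h1
      exact hδ (by linear_combination h2)
    · rcases hadj with ⟨hGadj, heq2⟩ | ⟨hadj2, heq1⟩
      · obtain ⟨h2, h3⟩ : fc u + δ = fc xc ∧ gc u + γ = gc xc := by
          simpa [Prod.ext_iff] using heq2
        exact ⟨hGadj, h2.symm, h3.symm⟩
      · exfalso
        have h1 : u = xc := heq1
        subst h1
        rcases hadj2 with ⟨hne, heqg⟩ | ⟨hne, heqf⟩
        · exact hγ (by linear_combination heqg)
        · exact hδ (by linear_combination heqf)
  · intro w' hadj hf hg
    have hw'near : (u, fc u + δ, gc u + γ) = (w', fc w', gc w') ∨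
        (Gc □ ((⊤ : SimpleGraph E2) □ (⊤ : SimpleGraph E2))).Adj
          (u, fc u + δ, gc u + γ) (w', fc w', gc w') :=
      Or.inr (Or.inl ⟨hadj, by rw [hf, hg]⟩)
    have hwc := hcu (w', fc w', gc w') ⟨⟨w', rfl⟩, hw'near⟩
    have hw'xc : w' = xc := congrArg Prod.fst hwc
    refine ⟨⟨?_, ?_⟩, hw'xc⟩
    · intro hδ0
      exact hadj.ne ((hu_eq (Or.inl hδ0)).trans hw'xc.symm)
    · intro hγ0
      exact hadj.ne ((hu_eq (Or.inr hγ0)).trans hw'xc.symm)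

theorem perfect_code_modified_product_construction (k r m : ℕ)
    (hk : 1 ≤ k) (hr : 1 ≤ r) (hm : m ≤ k * r)
    (M : Finset (Fin k × Fin r)) (hM : M.card = m)
    (f g : ∀ p : Fin k × Fin r, CellVtx M p → E2)
    (hcell : ∀ p : Fin k × Fin r,
      IsPerfectCode (CellGraph M p □ ((⊤ : SimpleGraph E2) □ (⊤ : SimpleGraph E2)))
        {q : CellVtx M p × E2 × E2 | ∃ x : CellVtx M p, q = (x, f p x, g p x)})
    (C' : Set (Fin k → E2)) (hC' : IsPerfectCode (HamE k) C')
    (C'' : Set (Fin r → E2)) (hC'' : IsPerfectCode (HamE r) C'') :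
    IsPerfectCode (BigGraph k r M)
      {q : (∀ p : Fin k × Fin r, CellVtx M p) × (Fin k → E2) × (Fin r → E2) |
        ∃ (x : ∀ p : Fin k × Fin r, CellVtx M p) (c' : Fin k → E2) (c'' : Fin r → E2),
          c' ∈ C' ∧ c'' ∈ C'' ∧
          q = (x, fun i => (∑ j : Fin r, f (i, j) (x (i, j))) + c' i,
                  fun j => (∑ i : Fin k, g (i, j) (x (i, j))) + c'' j)} ∧
    Nonempty (BigGraph k r M ≃g DoobE m (3 * k * r - 2 * m + k + r)) := by
  classical
  refine ⟨?_, ⟨bigIso M hM hm⟩⟩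
  rintro ⟨x, y, z⟩
  obtain ⟨a, ha⟩ : ∃ a : Fin k → E2, ∀ i, a i = y i - ∑ j : Fin r, f (i, j) (x (i, j)) :=
    ⟨_, fun _ => rfl⟩
  obtain ⟨b, hb⟩ : ∃ b : Fin r → E2, ∀ j, b j = z j - ∑ i : Fin k, g (i, j) (x (i, j)) :=
    ⟨_, fun _ => rfl⟩
  obtain ⟨c', ⟨hc'C, hc'near⟩, hc'u⟩ := hC' a
  obtain ⟨c'', ⟨hc''C, hc''near⟩, hc''u⟩ := hC'' b
  choose xt hxtE hxtU using fun (p : Fin k × Fin r) (δ γ : E2) =>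
    cellKey (CellGraph M p) (f p) (g p) (hcell p) (x p) δ γ
  have hc'alt : a = c' ∨ ∃ i, a i ≠ c' i ∧ ∀ i', i' ≠ i → a i' = c' i' := by
    rcases hc'near with h | ⟨i, hne, hoff⟩
    · exact Or.inl h
    · exact Or.inr ⟨i, by simpa using hne, hoff⟩
  have hc''alt : b = c'' ∨ ∃ j, b j ≠ c'' j ∧ ∀ j', j' ≠ j → b j' = c'' j' := by
    rcases hc''near with h | ⟨j, hne, hoff⟩
    · exact Or.inl h
    · exact Or.inr ⟨j, by simpa using hne, hoff⟩
  -- the key analysis of a codeword adjacent to `v` through a cell coordinate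
  have keyA : ∀ (x₀ : ∀ p : Fin k × Fin r, CellVtx M p) (c₀' : Fin k → E2)
      (c₀'' : Fin r → E2) (i₀ : Fin k) (j₀ : Fin r), c₀' ∈ C' → c₀'' ∈ C'' →
      (CellGraph M (i₀, j₀)).Adj (x (i₀, j₀)) (x₀ (i₀, j₀)) →
      (∀ q, q ≠ (i₀, j₀) → x q = x₀ q) →
      (∀ i', y i' = (∑ j' : Fin r, f (i', j') (x₀ (i', j'))) + c₀' i') →
      (∀ j', z j' = (∑ i' : Fin k, g (i', j') (x₀ (i', j'))) + c₀'' j') →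
      c₀' = c' ∧ c₀'' = c'' ∧ a i₀ ≠ c' i₀ ∧ b j₀ ≠ c'' j₀ ∧
        x₀ (i₀, j₀) = xt (i₀, j₀) (a i₀ - c' i₀) (b j₀ - c'' j₀) := by
    intro x₀ c₀' c₀'' i₀ j₀ h1 h2 hadjc hoffq hy hz
    have hFrow : ∀ i', i' ≠ i₀ →
        (∑ j' : Fin r, f (i', j') (x₀ (i', j'))) = ∑ j' : Fin r, f (i', j') (x (i', j')) :=
      fun i' hi' => Finset.sum_congr rfl fun j' _ =>
        (congrArg (f (i', j')) (hoffq (i', j') (by simp [hi']))).symm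
    have hGcol : ∀ j', j' ≠ j₀ →
        (∑ i' : Fin k, g (i', j') (x₀ (i', j'))) = ∑ i' : Fin k, g (i', j') (x (i', j')) :=
      fun j' hj' => Finset.sum_congr rfl fun i' _ =>
        (congrArg (g (i', j')) (hoffq (i', j') (by simp [hj']))).symm
    have hFi : (∑ j' : Fin r, f (i₀, j') (x₀ (i₀, j'))) =
        (∑ j' : Fin r, f (i₀, j') (x (i₀, j'))) - f (i₀, j₀) (x (i₀, j₀))
          + f (i₀, j₀) (x₀ (i₀, j₀)) :=
      sum_shift _ _ j₀ (fun j' hj' =>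
        (congrArg (f (i₀, j')) (hoffq (i₀, j') (by simp [hj']))).symm)
    have hGj : (∑ i' : Fin k, g (i', j₀) (x₀ (i', j₀))) =
        (∑ i' : Fin k, g (i', j₀) (x (i', j₀))) - g (i₀, j₀) (x (i₀, j₀))
          + g (i₀, j₀) (x₀ (i₀, j₀)) :=
      sum_shift _ _ i₀ (fun i' hi' =>
        (congrArg (g (i', j₀)) (hoffq (i', j₀) (by simp [hi']))).symm)
    have hc₀'eq : c₀' = c' := by
      refine hc'u c₀' ⟨h1, hamNear a c₀' i₀ (fun i' hi' => ?_)⟩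
      have h3 := hy i'
      rw [hFrow i' hi'] at h3
      linear_combination ha i' + h3
    have hc₀''eq : c₀'' = c'' := by
      refine hc''u c₀'' ⟨h2, hamNear b c₀'' j₀ (fun j' hj' => ?_)⟩
      have h3 := hz j'
      rw [hGcol j' hj'] at h3
      linear_combination hb j' + h3
    have hfδ : f (i₀, j₀) (x₀ (i₀, j₀)) = f (i₀, j₀) (x (i₀, j₀)) + (a i₀ - c' i₀) := by
      have h3 := hy i₀
      rw [hFi] at h3
      have hcc := congrFun hc₀'eq i₀
      linear_combination - ha i₀ - h3 - hcc
    have hgγ : g (i₀, j₀) (x₀ (i₀, j₀)) = g (i₀, j₀) (x (i₀, j₀)) + (b j₀ - c'' j₀) := by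
      have h3 := hz j₀
      rw [hGj] at h3
      have hcc := congrFun hc₀''eq j₀
      linear_combination - hb j₀ - h3 - hcc
    obtain ⟨⟨hδ0, hγ0⟩, hxteq⟩ := hxtU (i₀, j₀) (a i₀ - c' i₀) (b j₀ - c'' j₀)
      (x₀ (i₀, j₀)) hadjc hfδ hgγ
    exact ⟨hc₀'eq, hc₀''eq, sub_ne_zero.mp hδ0, sub_ne_zero.mp hγ0, hxteq⟩
  -- the main four cases
  rcases hc'alt with hA | ⟨i, hAne, hAoff⟩ <;> rcases hc''alt with hB | ⟨j, hBne, hBoff⟩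
  · -- Case 1 : a ∈ C', b ∈ C''
    refine ⟨(x, y, z), ⟨⟨x, c', c'', hc'C, hc''C, ?_⟩, Or.inl rfl⟩, ?_⟩
    · refine Prod.ext rfl (Prod.ext ?_ ?_) <;> funext u <;> simp only
      · linear_combination congrFun hA u - ha u
      · linear_combination congrFun hB u - hb u
    · rintro w₀ ⟨⟨x₀, c₀', c₀'', h1, h2, rfl⟩, hnear⟩
      rcases hnear with heq | hadj
      · exact heq.symm
      · exfalso
        rcases hadj with ⟨⟨⟨i₀, j₀⟩, hadjc, hoffc⟩, hyz⟩ | ⟨hham, hxx⟩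
        · obtain ⟨hy0, hz0⟩ : y = _ ∧ z = _ := by simpa [Prod.ext_iff] using hyz
          obtain ⟨-, -, hne, -, -⟩ := keyA x₀ c₀' c₀'' i₀ j₀ h1 h2 hadjc hoffc
            (fun i' => congrFun hy0 i') (fun j' => congrFun hz0 j')
          exact hne (congrFun hA i₀)
        · obtain rfl : x = x₀ := hxx
          rcases hham with ⟨⟨i₁, hne1, hoff1⟩, hzz⟩ | ⟨⟨j₁, hne1, hoff1⟩, hyy⟩
          · have hce : c₀' = c' := hc'u c₀' ⟨h1, hamNear a c₀' i₁ (fun i' hi' => by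
              have h3 : y i' = (∑ j' : Fin r, f (i', j') (x (i', j'))) + c₀' i' :=
                hoff1 i' hi'
              linear_combination ha i' + h3)⟩
            have hne1' : y i₁ ≠ (∑ j' : Fin r, f (i₁, j') (x (i₁, j'))) + c₀' i₁ := by
              simpa using hne1
            have hcc := congrFun hce i₁
            have hAi := congrFun hA i₁
            exact hne1' (by linear_combination - ha i₁ + hAi - hcc)
          · have hce : c₀'' = c'' := hc''u c₀'' ⟨h2, hamNear b c₀'' j₁ (fun j' hj' => by
              have h3 : z j' = (∑ i' : Fin k, g (i', j') (x (i', j'))) + c₀'' j' :=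
                hoff1 j' hj'
              linear_combination hb j' + h3)⟩
            have hne1' : z j₁ ≠ (∑ i' : Fin k, g (i', j₁) (x (i', j₁))) + c₀'' j₁ := by
              simpa using hne1
            have hcc := congrFun hce j₁
            have hBj := congrFun hB j₁
            exact hne1' (by linear_combination - hb j₁ + hBj - hcc)
  · -- Case 3 : a = c', b moves at j
    refine ⟨(x, y, fun j' => (∑ i' : Fin k, g (i', j') (x (i', j'))) + c'' j'),
      ⟨⟨x, c', c'', hc'C, hc''C, ?_⟩, Or.inr (Or.inr ⟨Or.inr ⟨⟨j, ?_, ?_⟩, rfl⟩, rfl⟩)⟩, ?_⟩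
    · refine Prod.ext rfl (Prod.ext ?_ rfl)
      funext u
      simp only
      linear_combination congrFun hA u - ha u
    · simp only [top_adj]
      intro hcon
      exact hBne (by linear_combination hb j + hcon)
    · intro j' hj'
      have h3 := hBoff j' hj'
      linear_combination h3 - hb j'
    · rintro w₀ ⟨⟨x₀, c₀', c₀'', h1, h2, rfl⟩, hnear⟩
      rcases hnear with heq | hadj
      · exfalso
        obtain ⟨hx0, hy0, hz0⟩ : x = x₀ ∧ y = _ ∧ z = _ := by
          simpa [Prod.ext_iff] using heq
        obtain rfl := hx0
        have hbeq : b = c₀'' := by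
          funext j'
          have h3 : z j' = (∑ i' : Fin k, g (i', j') (x (i', j'))) + c₀'' j' :=
            congrFun hz0 j'
          linear_combination hb j' + h3
        have hce : c₀'' = c'' := hc''u c₀'' ⟨h2, Or.inl hbeq⟩
        exact hBne (by rw [← hce]; exact congrFun hbeq j)
      · rcases hadj with ⟨⟨⟨i₀, j₀⟩, hadjc, hoffc⟩, hyz⟩ | ⟨hham, hxx⟩
        · exfalso
          obtain ⟨hy0, hz0⟩ : y = _ ∧ z = _ := by simpa [Prod.ext_iff] using hyz
          obtain ⟨-, -, hne, -, -⟩ := keyA x₀ c₀' c₀'' i₀ j₀ h1 h2 hadjc hoffc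
            (fun i' => congrFun hy0 i') (fun j' => congrFun hz0 j')
          exact hne (congrFun hA i₀)
        · obtain rfl : x = x₀ := hxx
          rcases hham with ⟨⟨i₁, hne1, hoff1⟩, hzz⟩ | ⟨⟨j₁, hne1, hoff1⟩, hyy⟩
          · exfalso
            have hce : c₀' = c' := hc'u c₀' ⟨h1, hamNear a c₀' i₁ (fun i' hi' => by
              have h3 : y i' = (∑ j' : Fin r, f (i', j') (x (i', j'))) + c₀' i' :=
                hoff1 i' hi'
              linear_combination ha i' + h3)⟩
            have hne1' : y i₁ ≠ (∑ j' : Fin r, f (i₁, j') (x (i₁, j'))) + c₀' i₁ := by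
              simpa using hne1
            have hcc := congrFun hce i₁
            have hAi := congrFun hA i₁
            exact hne1' (by linear_combination - ha i₁ + hAi - hcc)
          · have hce : c₀'' = c'' := hc''u c₀'' ⟨h2, hamNear b c₀'' j₁ (fun j' hj' => by
              have h3 : z j' = (∑ i' : Fin k, g (i', j') (x (i', j'))) + c₀'' j' :=
                hoff1 j' hj'
              linear_combination hb j' + h3)⟩
            have hyeq : (fun i' => (∑ j' : Fin r, f (i', j') (x (i', j'))) + c₀' i') = y := by
              funext i'
              have h3 : y i' = (∑ j' : Fin r, f (i', j') (x (i', j'))) + c₀' i' :=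
                congrFun hyy i'
              linear_combination - h3
            rw [hce, hyeq]
  · -- Case 2 : a moves at i, b = c''
    refine ⟨(x, fun i' => (∑ j' : Fin r, f (i', j') (x (i', j'))) + c' i', z),
      ⟨⟨x, c', c'', hc'C, hc''C, ?_⟩, Or.inr (Or.inr ⟨Or.inl ⟨⟨i, ?_, ?_⟩, rfl⟩, rfl⟩)⟩, ?_⟩
    · refine Prod.ext rfl (Prod.ext rfl ?_)
      funext u
      simp only
      linear_combination congrFun hB u - hb u
    · simp only [top_adj]
      intro hcon
      exact hAne (by linear_combination ha i + hcon)
    · intro i' hi'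
      have h3 := hAoff i' hi'
      linear_combination h3 - ha i'
    · rintro w₀ ⟨⟨x₀, c₀', c₀'', h1, h2, rfl⟩, hnear⟩
      rcases hnear with heq | hadj
      · exfalso
        obtain ⟨hx0, hy0, hz0⟩ : x = x₀ ∧ y = _ ∧ z = _ := by
          simpa [Prod.ext_iff] using heq
        obtain rfl := hx0
        have haeq : a = c₀' := by
          funext i'
          have h3 : y i' = (∑ j' : Fin r, f (i', j') (x (i', j'))) + c₀' i' :=
            congrFun hy0 i'
          linear_combination ha i' + h3
        have hce : c₀' = c' := hc'u c₀' ⟨h1, Or.inl haeq⟩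
        exact hAne (by rw [← hce]; exact congrFun haeq i)
      · rcases hadj with ⟨⟨⟨i₀, j₀⟩, hadjc, hoffc⟩, hyz⟩ | ⟨hham, hxx⟩
        · exfalso
          obtain ⟨hy0, hz0⟩ : y = _ ∧ z = _ := by simpa [Prod.ext_iff] using hyz
          obtain ⟨-, -, -, hne, -⟩ := keyA x₀ c₀' c₀'' i₀ j₀ h1 h2 hadjc hoffc
            (fun i' => congrFun hy0 i') (fun j' => congrFun hz0 j')
          exact hne (congrFun hB j₀)
        · obtain rfl : x = x₀ := hxx
          rcases hham with ⟨⟨i₁, hne1, hoff1⟩, hzz⟩ | ⟨⟨j₁, hne1, hoff1⟩, hyy⟩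
          · have hce : c₀' = c' := hc'u c₀' ⟨h1, hamNear a c₀' i₁ (fun i' hi' => by
              have h3 : y i' = (∑ j' : Fin r, f (i', j') (x (i', j'))) + c₀' i' :=
                hoff1 i' hi'
              linear_combination ha i' + h3)⟩
            have hzeq : (fun j' => (∑ i' : Fin k, g (i', j') (x (i', j'))) + c₀'' j') = z := by
              funext j'
              have h3 : z j' = (∑ i' : Fin k, g (i', j') (x (i', j'))) + c₀'' j' :=
                congrFun hzz j'
              linear_combination - h3
            rw [hce, hzeq]
          · exfalso
            have hce : c₀'' = c'' := hc''u c₀'' ⟨h2, hamNear b c₀'' j₁ (fun j' hj' => by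
              have h3 : z j' = (∑ i' : Fin k, g (i', j') (x (i', j'))) + c₀'' j' :=
                hoff1 j' hj'
              linear_combination hb j' + h3)⟩
            have hne1' : z j₁ ≠ (∑ i' : Fin k, g (i', j₁) (x (i', j₁))) + c₀'' j₁ := by
              simpa using hne1
            have hcc := congrFun hce j₁
            have hBj := congrFun hB j₁
            exact hne1' (by linear_combination - hb j₁ + hBj - hcc)
  · -- Case 4 : a moves at i and b moves at j; a cell changes
    have hδ : a i - c' i ≠ 0 := sub_ne_zero_of_ne hAne
    have hγ : b j - c'' j ≠ 0 := sub_ne_zero_of_ne hBne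
    obtain ⟨hadjt, hft, hgt⟩ := hxtE (i, j) (a i - c' i) (b j - c'' j) ⟨hδ, hγ⟩
    set w : CellVtx M (i, j) := xt (i, j) (a i - c' i) (b j - c'' j) with hw
    set xs : ∀ p : Fin k × Fin r, CellVtx M p := Function.update x (i, j) w with hxs
    have hxs_same : xs (i, j) = w := Function.update_self _ _ _
    have hxs_off : ∀ q, q ≠ (i, j) → xs q = x q := fun q hq => Function.update_of_ne hq _ _
    have hFrow' : ∀ i', i' ≠ i →
        (∑ j' : Fin r, f (i', j') (xs (i', j'))) = ∑ j' : Fin r, f (i', j') (x (i', j')) :=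
      fun i' hi' => Finset.sum_congr rfl fun j' _ =>
        congrArg (f (i', j')) (hxs_off (i', j') (by simp [hi']))
    have hGcol' : ∀ j', j' ≠ j →
        (∑ i' : Fin k, g (i', j') (xs (i', j'))) = ∑ i' : Fin k, g (i', j') (x (i', j')) :=
      fun j' hj' => Finset.sum_congr rfl fun i' _ =>
        congrArg (g (i', j')) (hxs_off (i', j') (by simp [hj']))
    have hFi' : (∑ j' : Fin r, f (i, j') (xs (i, j'))) =
        (∑ j' : Fin r, f (i, j') (x (i, j'))) - f (i, j) (x (i, j)) + f (i, j) (xs (i, j)) :=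
      sum_shift _ _ j (fun j' hj' =>
        congrArg (f (i, j')) (hxs_off (i, j') (by simp [hj'])))
    have hGj' : (∑ i' : Fin k, g (i', j) (xs (i', j))) =
        (∑ i' : Fin k, g (i', j) (x (i', j))) - g (i, j) (x (i, j)) + g (i, j) (xs (i, j)) :=
      sum_shift _ _ i (fun i' hi' =>
        congrArg (g (i', j)) (hxs_off (i', j) (by simp [hi'])))
    have hfxs : f (i, j) (xs (i, j)) = f (i, j) (x (i, j)) + (a i - c' i) := by
      rw [hxs_same]; exact hft
    have hgxs : g (i, j) (xs (i, j)) = g (i, j) (x (i, j)) + (b j - c'' j) := by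
      rw [hxs_same]; exact hgt
    refine ⟨(xs, fun i' => (∑ j' : Fin r, f (i', j') (xs (i', j'))) + c' i',
        fun j' => (∑ i' : Fin k, g (i', j') (xs (i', j'))) + c'' j'),
      ⟨⟨xs, c', c'', hc'C, hc''C, rfl⟩,
        Or.inr (Or.inl ⟨⟨(i, j), ?_, fun q hq => (hxs_off q hq).symm⟩, ?_⟩)⟩, ?_⟩
    · show (CellGraph M (i, j)).Adj (x (i, j)) (xs (i, j))
      rw [hxs_same]; exact hadjt
    · refine Prod.ext ?_ ?_ <;> simp only <;> funext u
      · by_cases hu : u = i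
        · subst hu
          linear_combination - hFi' - hfxs - ha u
        · have h4 := hFrow' u hu
          have h5 := hAoff u hu
          linear_combination - h4 - ha u + h5
      · by_cases hu : u = j
        · subst hu
          linear_combination - hGj' - hgxs - hb u
        · have h4 := hGcol' u hu
          have h5 := hBoff u hu
          linear_combination - h4 - hb u + h5
    · rintro w₀ ⟨⟨x₀, c₀', c₀'', h1, h2, rfl⟩, hnear⟩
      rcases hnear with heq | hadj
      · exfalso
        obtain ⟨hx0, hy0, hz0⟩ : x = x₀ ∧ y = _ ∧ z = _ := by
          simpa [Prod.ext_iff] using heq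
        obtain rfl := hx0
        have haeq : a = c₀' := by
          funext i'
          have h3 : y i' = (∑ j' : Fin r, f (i', j') (x (i', j'))) + c₀' i' :=
            congrFun hy0 i'
          linear_combination ha i' + h3
        have hce : c₀' = c' := hc'u c₀' ⟨h1, Or.inl haeq⟩
        exact hAne (by rw [← hce]; exact congrFun haeq i)
      · rcases hadj with ⟨⟨⟨i₀, j₀⟩, hadjc, hoffc⟩, hyz⟩ | ⟨hham, hxx⟩
        · obtain ⟨hy0, hz0⟩ : y = _ ∧ z = _ := by simpa [Prod.ext_iff] using hyz
          obtain ⟨hce1, hce2, hnei, hnej, hxteq⟩ := keyA x₀ c₀' c₀'' i₀ j₀ h1 h2 hadjc hoffc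
            (fun i' => congrFun hy0 i') (fun j' => congrFun hz0 j')
          obtain rfl : i₀ = i := by
            by_contra hcon
            exact hnei (hAoff i₀ hcon)
          obtain rfl : j₀ = j := by
            by_contra hcon
            exact hnej (hBoff j₀ hcon)
          have hoffc' : ∀ q, q ≠ (i₀, j₀) → x q = x₀ q := hoffc
          have hx0 : x₀ = xs := by
            funext q
            by_cases hq : q = (i₀, j₀)
            · subst hq
              rw [hxteq, hxs_same]
            · rw [← hoffc' q hq, hxs_off q hq]
          rw [hce1, hce2, hx0]
        · exfalso
          obtain rfl : x = x₀ := hxx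
          rcases hham with ⟨⟨i₁, hne1, hoff1⟩, hzz⟩ | ⟨⟨j₁, hne1, hoff1⟩, hyy⟩
          · have hbeq : b = c₀'' := by
              funext j'
              have h3 : z j' = (∑ i' : Fin k, g (i', j') (x (i', j'))) + c₀'' j' :=
                congrFun hzz j'
              linear_combination hb j' + h3
            have hce : c₀'' = c'' := hc''u c₀'' ⟨h2, Or.inl hbeq⟩
            exact hBne (by rw [← hce]; exact congrFun hbeq j)
          · have haeq : a = c₀' := by
              funext i'
              have h3 : y i' = (∑ j' : Fin r, f (i', j') (x (i', j'))) + c₀' i' :=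
                congrFun hyy i'
              linear_combination ha i' + h3
            have hce : c₀' = c' := hc'u c₀' ⟨h1, Or.inl haeq⟩
            exact hAne (by rw [← hce]; exact congrFun haeq i)
end
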